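/- Let I be a finite set with a symmetric ℤ-valued form (i,j) ↦ i·j such that i·i is a positive even integer, and let F be the free ℚ(q)-algebra on (θ_i). Fix i ≠ j in I, set a = 2(i·j)/(i·i) (assumed to be a non-positive integer), q_i = q^{(i·i)/2}, and let S(θ_i, θ_j) = Σ_{s=0}^{1-a} (-1)ˢ · [1-a choose s]_{q_i} · θ_iˢ · θ_j · θ_i^{1-a-s} ∈ F, where [N choose s]_{q_i} is the balanced Gaussian binomial in the variable q_i. Then for every ℓ ∈ I, r_ℓ(S(θ_i, θ_j)) = 0, where r_ℓ is the twisted derivation with r_ℓ(1) = 0, r_ℓ(θ_k) = δ_{ℓk}, r_ℓ(xx') = x·r_ℓ(x') + q^{ℓ·μ'}·r_ℓ(x)·x' for x' homogeneous of degree μ'. -/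

import Mathlib

noncomputable section

open scoped BigOperators

/-- The weight in `ℕ[I]` of a word in the alphabet `I`. -/
def wt {I : Type*} (l : List I) : I →₀ ℕ := (l.map fun i => Finsupp.single i 1).sum

/-- The homogeneous component of degree `μ ∈ ℕ[I]` of the free algebra on `(θ_i)`:
the span of the words of weight `μ`. -/
def homog (I : Type*) (μ : I →₀ ℕ) : Submodule (RatFunc ℚ) (FreeAlgebra (RatFunc ℚ) I) :=
  Submodule.span (RatFunc ℚ)
    {x | ∃ l : List I, wt l = μ ∧ x = (l.map (FreeAlgebra.ι (RatFunc ℚ))).prod}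

/-- The pairing `i·μ = Σ_j μ_j (i·j)` of `i ∈ I` with `μ ∈ ℕ[I]`. -/
def pairing {I : Type*} (d : I → I → ℤ) (i : I) (μ : I →₀ ℕ) : ℤ :=
  μ.sum fun j n => (n : ℤ) * d i j

/-- The quantum integer `[k]_t = (tᵏ - t⁻ᵏ)/(t - t⁻¹)`. -/
def qintAt (t : RatFunc ℚ) (k : ℕ) : RatFunc ℚ := (t ^ k - t⁻¹ ^ k) / (t - t⁻¹)

/-- The quantum factorial `[m]_t! = ∏_{j=1}^m [j]_t`. -/
def qfactAt (t : RatFunc ℚ) (m : ℕ) : RatFunc ℚ := ∏ l ∈ Finset.range m, qintAt t (l + 1)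

/-- The balanced Gaussian binomial `[m choose s]_t`. -/
def qbinomAt (t : RatFunc ℚ) (m s : ℕ) : RatFunc ℚ :=
  qfactAt t m / (qfactAt t s * qfactAt t (m - s))

lemma Xpow_ne_one (m : ℕ) (hm : 0 < m) : (RatFunc.X : RatFunc ℚ)^m ≠ 1 := by
  rw [← RatFunc.algebraMap_X (K := ℚ), ← map_pow, ← map_one (algebraMap (Polynomial ℚ) (RatFunc ℚ))]
  intro h
  have h2 := RatFunc.algebraMap_injective ℚ h
  have := congrArg Polynomial.natDegree h2
  simp [Polynomial.natDegree_X_pow] at this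
  omega

variable (t : RatFunc ℚ) (ht0 : t ≠ 0) (ht1 : ∀ m : ℕ, 0 < m → t^m ≠ 1)

section
include ht0 ht1

lemma hsub : t - t⁻¹ ≠ 0 := by
  rw [sub_ne_zero]
  intro h
  refine ht1 2 (by norm_num) ?_
  rw [sq]; nth_rewrite 2 [h]; exact mul_inv_cancel₀ ht0

lemma qint_ne_zero (k : ℕ) (hk : 0 < k) : qintAt t k ≠ 0 := by
  apply div_ne_zero _ (hsub t ht0 ht1)
  rw [sub_ne_zero, inv_pow]
  intro h
  refine ht1 (2*k) (by omega) ?_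
  rw [two_mul, pow_add]; nth_rewrite 2 [h]; exact mul_inv_cancel₀ (pow_ne_zero _ ht0)

lemma qfact_ne_zero (m : ℕ) : qfactAt t m ≠ 0 := by
  apply Finset.prod_ne_zero_iff.2
  intro l _
  exact qint_ne_zero t ht0 ht1 _ (Nat.succ_pos l)

lemma qint_pascal (a b : ℕ) :
    qintAt t (a + b) = t⁻¹ ^ a * qintAt t b + t ^ b * qintAt t a := by
  unfold qintAt
  rw [← mul_div_assoc, ← mul_div_assoc, ← add_div]
  congr 1
  field_simp
  ring

end

lemma qfact_succ (m : ℕ) : qfactAt t (m+1) = qfactAt t m * qintAt t (m+1) :=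
  Finset.prod_range_succ _ _

lemma qfact_zero : qfactAt t 0 = 1 := rfl


section
include ht0 ht1

lemma qbinom_zero' (m : ℕ) : qbinomAt t m 0 = 1 := by
  unfold qbinomAt
  rw [qfact_zero, one_mul, Nat.sub_zero, div_self (qfact_ne_zero t ht0 ht1 m)]

lemma qbinom_self (m : ℕ) : qbinomAt t m m = 1 := by
  unfold qbinomAt
  rw [Nat.sub_self, qfact_zero, mul_one, div_self (qfact_ne_zero t ht0 ht1 m)]

-- ratio identity: [n,k]·[n-k] = [n,k+1]·[k+1] for k < n
lemma qbinom_ratio (n k : ℕ) (hk : k < n) :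
    qbinomAt t n k * qintAt t (n - k) = qbinomAt t n (k+1) * qintAt t (k+1) := by
  unfold qbinomAt
  have h1 : qfactAt t (n - k) = qfactAt t (n - (k+1)) * qintAt t (n - k) := by
    rw [show n - k = (n - (k+1)) + 1 from by omega, qfact_succ,
      show n - (k+1) + 1 = n - k from by omega]
  have h2 : qfactAt t (k+1) = qfactAt t k * qintAt t (k+1) := qfact_succ t k
  rw [h1, h2]
  have f0 := qfact_ne_zero t ht0 ht1
  have i1 : qintAt t (n - k) ≠ 0 := qint_ne_zero t ht0 ht1 _ (by omega)
  have i2 : qintAt t (k+1) ≠ 0 := qint_ne_zero t ht0 ht1 _ (by omega)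
  rw [div_mul_eq_mul_div, div_mul_eq_mul_div,
    div_eq_div_iff (by simp [f0, i1, i2]) (by simp [f0, i1, i2])]
  ring

-- Pascal: for s < n, [n+1, s+1] = t⁻¹^(s+1) [n, s+1] + t^(n-s) [n, s]
lemma qbinom_pascal (n s : ℕ) (hs : s < n) :
    qbinomAt t (n+1) (s+1) =
      t⁻¹ ^ (s+1) * qbinomAt t n (s+1) + t ^ (n-s) * qbinomAt t n s := by
  unfold qbinomAt
  have e1 : n + 1 - (s+1) = n - s := by omega
  have e2 : n - (s+1) = (n - s) - 1 := by omega
  have e3 : n - s = (n - s - 1) + 1 := by omega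
  have hfn1 : qfactAt t (n+1) = qfactAt t n * qintAt t (n+1) := qfact_succ t n
  have hfs1 : qfactAt t (s+1) = qfactAt t s * qintAt t (s+1) := qfact_succ t s
  have hfns : qfactAt t (n - s) = qfactAt t (n - s - 1) * qintAt t (n - s) := by
    rw [e3, qfact_succ, ← e3]
  have hp := qint_pascal t ht0 ht1 (s+1) (n-s)
  have : s + 1 + (n - s) = n + 1 := by omega
  rw [this] at hp
  rw [e1, e2, hfn1, hfs1, hfns, hp]
  have f0 := qfact_ne_zero t ht0 ht1
  have i1 : qintAt t (n - s) ≠ 0 := qint_ne_zero t ht0 ht1 _ (by omega)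
  have i2 : qintAt t (s+1) ≠ 0 := qint_ne_zero t ht0 ht1 _ (by omega)
  rw [← mul_div_assoc, ← mul_div_assoc,
    div_add_div _ _ (by simp [f0, i1, i2]) (by simp [f0, i1, i2]),
    div_eq_div_iff (by simp [f0, i1, i2]) (by simp [f0, i1, i2])]
  ring

end

section
include ht0 ht1

lemma qbinom_alt (n : ℕ) (hn : 0 < n) :
    ∑ s ∈ Finset.range (n+1),
      (-1 : RatFunc ℚ)^s * t^(s*(n-1)) * qbinomAt t n s = 0 := by
  induction n, hn using Nat.le_induction with
  | base =>
    simp [Finset.sum_range_succ, qbinom_zero' t ht0 ht1, qbinom_self t ht0 ht1]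
  | succ n hn1 ih =>
    obtain ⟨m, rfl⟩ : ∃ m, n = m + 1 := ⟨n - 1, by omega⟩
    simp only [Nat.add_sub_cancel] at ih ⊢
    have hA : ∑ s ∈ Finset.range (m+1),
        (-1 : RatFunc ℚ)^s * t^((s+1)*m) * qbinomAt t (m+1) (s+1) = 1 := by
      have h0 := Finset.sum_range_succ' (fun s => (-1 : RatFunc ℚ)^s * t^(s*m) * qbinomAt t (m+1) s) (m+1)
      rw [h0] at ih
      simp only [pow_succ, pow_zero, Nat.zero_mul, one_mul,
        qbinom_zero' t ht0 ht1, mul_one] at ih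
      have h1 : ∑ s ∈ Finset.range (m+1), (-1 : RatFunc ℚ)^s * -1 * t^((s+1)*m) * qbinomAt t (m+1) (s+1)
          = -∑ s ∈ Finset.range (m+1), (-1 : RatFunc ℚ)^s * t^((s+1)*m) * qbinomAt t (m+1) (s+1) := by
        rw [← Finset.sum_neg_distrib]
        exact Finset.sum_congr rfl fun s _ => by ring
      rw [h1] at ih
      linear_combination -ih
    have hC : ∑ s ∈ Finset.range (m+1),
        (-1 : RatFunc ℚ)^s * t^(s*m) * qbinomAt t (m+1) s
          = -((-1 : RatFunc ℚ)^(m+1) * t^((m+1)*m)) := by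
      have h0 := Finset.sum_range_succ (fun s => (-1 : RatFunc ℚ)^s * t^(s*m) * qbinomAt t (m+1) s) (m+1)
      rw [h0, qbinom_self t ht0 ht1, mul_one] at ih
      linear_combination ih
    rw [Finset.sum_range_succ' (fun s => (-1 : RatFunc ℚ)^s * t^(s*(m+1)) * qbinomAt t (m+2) s) (m+2),
      Finset.sum_range_succ]
    have key : ∀ s ∈ Finset.range (m+1),
        (-1 : RatFunc ℚ)^(s+1) * t^((s+1)*(m+1)) * qbinomAt t (m+2) (s+1)
          = -((-1 : RatFunc ℚ)^s * t^((s+1)*m) * qbinomAt t (m+1) (s+1))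
            - t^(2*(m+1)) * ((-1 : RatFunc ℚ)^s * t^(s*m) * qbinomAt t (m+1) s) := by
      intro s hs
      rw [Finset.mem_range] at hs
      rw [show m + 2 = (m+1) + 1 from rfl, qbinom_pascal t ht0 ht1 (m+1) s (by omega)]
      obtain ⟨u, rfl⟩ : ∃ u, m = s + u := ⟨m - s, by omega⟩
      rw [show s + u + 1 - s = u + 1 from by omega]
      rw [show (s+1)*(s+u+1) = (s+1)*(s+u) + (s+1) from by ring, pow_add]
      have hti : t^(s+1) * t⁻¹^(s+1) = 1 := by
        rw [← mul_pow, mul_inv_cancel₀ ht0, one_pow]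
      have htY : t^((s+1)*(s+u)) * t^(s+1) * t^(u+1) = t^(2*(s+u+1)) * t^(s*(s+u)) := by
        rw [← pow_add, ← pow_add, ← pow_add]
        congr 1
        ring
      linear_combination (-(-1 : RatFunc ℚ)^s * t^((s+1)*(s+u)) * qbinomAt t (s+u+1) (s+1)) * hti
        + (-(-1 : RatFunc ℚ)^s * qbinomAt t (s+u+1) s) * htY
    rw [Finset.sum_congr rfl key, Finset.sum_sub_distrib, Finset.sum_neg_distrib,
      ← Finset.mul_sum, hA, hC,
      show m+1+1 = m+2 from by omega,
      qbinom_self t ht0 ht1, qbinom_zero' t ht0 ht1]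
    have hE : t^(2*(m+1)) * t^((m+1)*m) = t^((m+2)*(m+1)) := by
      rw [show (m+2)*(m+1) = 2*(m+1) + (m+1)*m from by ring, pow_add]
    simp only [Nat.zero_mul, pow_zero, one_mul, mul_one]
    linear_combination ((-1 : RatFunc ℚ)^(m+1)) * hE

end

section FreeAux
variable {I : Type*} [DecidableEq I]

lemma prod_replicate_eq_pow (k : I) (m : ℕ) :
    ((List.replicate m k).map (FreeAlgebra.ι (RatFunc ℚ))).prod
      = FreeAlgebra.ι (RatFunc ℚ) k ^ m := by
  induction m with
  | zero => simp
  | succ m ih => rw [List.replicate_succ, List.map_cons, List.prod_cons, ih, pow_succ']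

lemma wt_replicate (k : I) (m : ℕ) : wt (List.replicate m k) = Finsupp.single k m := by
  induction m with
  | zero => simp [wt]
  | succ m ih =>
    rw [wt, List.replicate_succ, List.map_cons, List.sum_cons, ← wt, ih]
    rw [show m + 1 = 1 + m from by omega, Finsupp.single_add]

lemma pow_mem_homog (k : I) (m : ℕ) :
    FreeAlgebra.ι (RatFunc ℚ) k ^ m ∈ homog I (Finsupp.single k m) := by
  rw [← prod_replicate_eq_pow, ← wt_replicate k m]
  exact Submodule.subset_span ⟨List.replicate m k, rfl, rfl⟩

lemma cons_pow_mem_homog (j k : I) (m : ℕ) :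
    FreeAlgebra.ι (RatFunc ℚ) j * FreeAlgebra.ι (RatFunc ℚ) k ^ m
      ∈ homog I (Finsupp.single j 1 + Finsupp.single k m) := by
  have h1 : wt (j :: List.replicate m k) = Finsupp.single j 1 + Finsupp.single k m := by
    rw [wt, List.map_cons, List.sum_cons, ← wt, wt_replicate]
  have h2 : ((j :: List.replicate m k).map (FreeAlgebra.ι (RatFunc ℚ))).prod
      = FreeAlgebra.ι (RatFunc ℚ) j * FreeAlgebra.ι (RatFunc ℚ) k ^ m := by
    rw [List.map_cons, List.prod_cons, prod_replicate_eq_pow]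
  rw [← h1, ← h2]
  exact Submodule.subset_span ⟨_, rfl, rfl⟩

lemma ι_mem_homog (k : I) :
    FreeAlgebra.ι (RatFunc ℚ) k ∈ homog I (Finsupp.single k 1) := by
  have := pow_mem_homog k 1
  rwa [pow_one] at this

lemma pairing_single (d : I → I → ℤ) (ℓ k : I) (m : ℕ) :
    pairing d ℓ (Finsupp.single k m) = (m : ℤ) * d ℓ k := by
  rw [pairing, Finsupp.sum_single_index]
  simp

lemma pairing_add (d : I → I → ℤ) (ℓ : I) (μ ν : I →₀ ℕ) :
    pairing d ℓ (μ + ν) = pairing d ℓ μ + pairing d ℓ ν := by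
  rw [pairing, pairing, pairing, Finsupp.sum_add_index']
  · intro k; simp
  · intro k b c; push_cast; ring

end FreeAux

/-- The twisted derivations `r_ℓ` annihilate the quantum Serre relator
`S(θ_i, θ_j) = Σ_{s=0}^{1-a} (-1)ˢ [1-a choose s]_{q_i} θ_iˢ θ_j θ_i^{1-a-s}`. -/
theorem twisted_derivation_annihilates_serre (I : Type*) [Fintype I] [DecidableEq I]
    (d : I → I → ℤ) (hsymm : ∀ i j : I, d i j = d j i)
    (i j : I) (hij : i ≠ j)
    (e : ℕ) (he : 0 < e) (hii : d i i = 2 * (e : ℤ))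
    (a : ℤ) (ha : a ≤ 0) (haij : 2 * d i j = a * d i i)
    (n : ℕ) (hn : (n : ℤ) = 1 - a)
    (ℓ : I)
    (r : FreeAlgebra (RatFunc ℚ) I →ₗ[RatFunc ℚ] FreeAlgebra (RatFunc ℚ) I)
    (hr1 : r 1 = 0)
    (hrθ : ∀ k : I, r (FreeAlgebra.ι (RatFunc ℚ) k) = if k = ℓ then 1 else 0)
    (hrL : ∀ (μ μ' : I →₀ ℕ) (x x' : FreeAlgebra (RatFunc ℚ) I),
      x ∈ homog I μ → x' ∈ homog I μ' →
      r (x * x') =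
        x * r x' + ((RatFunc.X : RatFunc ℚ) ^ pairing d ℓ μ') • (r x * x')) :
    r (∑ s ∈ Finset.range (n + 1),
        (((-1 : RatFunc ℚ)) ^ s * qbinomAt ((RatFunc.X : RatFunc ℚ) ^ e) n s) •
          (FreeAlgebra.ι (RatFunc ℚ) i ^ s * FreeAlgebra.ι (RatFunc ℚ) j *
            FreeAlgebra.ι (RatFunc ℚ) i ^ (n - s))) = 0 := by
  classical
  have hX0 : (RatFunc.X : RatFunc ℚ) ≠ 0 := RatFunc.X_ne_zero
  set q : RatFunc ℚ := RatFunc.X with hq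
  set t : RatFunc ℚ := q ^ e with htdef
  set θ := FreeAlgebra.ι (RatFunc ℚ) (X := I) with hθ
  have ht0 : t ≠ 0 := pow_ne_zero _ hX0
  have ht1 : ∀ m : ℕ, 0 < m → t ^ m ≠ 1 := by
    intro m hm
    rw [htdef, ← pow_mul]
    exact Xpow_ne_one _ (by positivity)
  have hn1 : 1 ≤ n := by omega
  have hdij : d i j = (1 - (n:ℤ)) * e := by
    have h2 : 2 * d i j = 2 * (a * e) := by rw [haij, hii]; ring
    have h3 : d i j = a * e := by linarith
    rw [h3]
    have : a = 1 - (n:ℤ) := by omega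
    rw [this]
  simp only [mul_assoc, map_sum, LinearMap.map_smul]
  by_cases hLi : ℓ = i
  · -- case ℓ = i
    set A : ℕ → RatFunc ℚ := fun m => ∑ u ∈ Finset.range m, q ^ (2*e*u) with hAdef
    have hA0 : A 0 = 0 := by simp [hAdef]
    have hAsucc : ∀ m, A (m+1) = A m + q ^ (2*e*m) := fun m => Finset.sum_range_succ _ m
    have hgeom : ∀ k, A (k+1) = t^k * qintAt t (k+1) := by
      intro k
      have h2 : ∀ u ∈ Finset.range (k+1), q^(2*e*u) = (t^2)^u := by
        intro u _
        rw [htdef, ← pow_mul, ← pow_mul]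
        congr 1
        ring
      rw [hAdef]
      simp only []
      rw [Finset.sum_congr rfl h2, geom_sum_eq (by
        intro h
        exact ht1 2 (by norm_num) h) (k+1), qintAt, ← mul_div_assoc,
        div_eq_div_iff (sub_ne_zero.2 (fun h => ht1 2 (by norm_num) (by rw [sq] at h ⊢; exact h)))
          (hsub t ht0 ht1)]
      field_simp
      have hk : (t * t⁻¹) ^ (k+1) = 1 := by rw [mul_inv_cancel₀ ht0, one_pow]
      linear_combination (t^2 - 1) * hk
    have hri : ∀ m, r (θ i ^ m) = A m • θ i ^ (m-1) := by
      intro m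
      induction m with
      | zero => rw [pow_zero, hr1, hA0, zero_smul]
      | succ m ih =>
        rw [pow_succ',
          hrL (Finsupp.single i 1) (Finsupp.single i m) _ _ (ι_mem_homog i) (pow_mem_homog i m),
          ih, hrθ i, if_pos hLi.symm, pairing_single, hLi, hii, one_mul, mul_smul_comm]
        have hz : q ^ ((m:ℤ) * (2*(e:ℤ))) = q ^ (2*e*m) := by
          rw [← zpow_natCast q (2*e*m)]
          congr 1
          push_cast
          ring
        rw [hz]
        cases m with
        | zero => simp [hAsucc, hA0]
        | succ m =>
          rw [Nat.add_sub_cancel, Nat.add_sub_cancel, ← pow_succ', hAsucc (m+1), add_smul]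
    have hrji : ∀ m, r (θ j * θ i ^ m) = A m • (θ j * θ i ^ (m-1)) := by
      intro m
      rw [hrL (Finsupp.single j 1) (Finsupp.single i m) _ _ (ι_mem_homog j) (pow_mem_homog i m),
        hri, hrθ j, if_neg (fun h => hij (h.trans hLi).symm), zero_mul, smul_zero, add_zero,
        mul_smul_comm]
    have hterm : ∀ s ∈ Finset.range (n+1),
        (((-1 : RatFunc ℚ)) ^ s * qbinomAt t n s) • r (θ i ^ s * (θ j * θ i ^ (n - s)))
          = ((((-1 : RatFunc ℚ)) ^ s * qbinomAt t n s) * A (n-s)) • (θ i ^ s * (θ j * θ i ^ (n-s-1)))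
            + ((((-1 : RatFunc ℚ)) ^ s * qbinomAt t n s) *
                (q ^ ((1:ℤ) * d i j + (((n-s) : ℕ):ℤ) * d i i) * A s)) •
              (θ i ^ (s-1) * (θ j * θ i ^ (n-s))) := by
      intro s hs
      rw [hrL (Finsupp.single i s) _ _ _ (pow_mem_homog i s) (cons_pow_mem_homog j i (n-s)),
        hrji, hri, pairing_add, pairing_single, pairing_single, hLi, mul_smul_comm, smul_mul_assoc,
        smul_smul, smul_add, smul_smul, smul_smul, Nat.cast_one]
    rw [Finset.sum_congr rfl hterm, Finset.sum_add_distrib, Finset.sum_range_succ,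
      Finset.sum_range_succ' (fun s => ((((-1 : RatFunc ℚ)) ^ s * qbinomAt t n s) *
                (q ^ ((1:ℤ) * d i j + (((n-s) : ℕ):ℤ) * d i i) * A s)) •
              (θ i ^ (s-1) * (θ j * θ i ^ (n-s))))]
    rw [Nat.sub_self, hA0, mul_zero, zero_smul, add_zero, mul_zero, mul_zero, zero_smul,
      add_zero, ← Finset.sum_add_distrib]
    apply Finset.sum_eq_zero
    intro s hs
    rw [Finset.mem_range] at hs
    rw [Nat.add_sub_cancel, show n - (s+1) = n - s - 1 from by omega]
    rw [← add_smul]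
    convert zero_smul (RatFunc ℚ) (θ i ^ s * (θ j * θ i ^ (n-s-1)))
    -- coefficient identity
    have hv : n - s = (n - s - 1) + 1 := by omega
    have hAn : A (n-s) = t^(n-s-1) * qintAt t (n-s) := by
      rw [hv, hgeom, ← hv]
    have hAs : A (s+1) = t^s * qintAt t (s+1) := hgeom s
    have hqz : q ^ ((1:ℤ) * d i j + (((n-s-1) : ℕ):ℤ) * d i i) * t^s = t^(n-s-1) := by
      rw [hdij, hii, htdef, ← pow_mul, ← pow_mul, ← zpow_natCast q (e*s), ← zpow_natCast q (e*(n-s-1)),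
        ← zpow_add₀ hX0]
      congr 1
      push_cast [Nat.cast_sub (by omega : 1 ≤ n - s), Nat.cast_sub (by omega : s ≤ n)]
      ring
    rw [hAn, hAs]
    have hratio := qbinom_ratio t ht0 ht1 n s hs
    linear_combination ((-1 : RatFunc ℚ)^s * t^(n-s-1)) * hratio
      - ((-1 : RatFunc ℚ)^s * qbinomAt t n (s+1) * qintAt t (s+1)) * hqz
  · by_cases hLj : ℓ = j
    · -- case ℓ = j
      have hri : ∀ m, r (θ i ^ m) = 0 := by
        intro m
        induction m with
        | zero => simpa using hr1
        | succ m ih =>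
          rw [pow_succ',
            hrL (Finsupp.single i 1) (Finsupp.single i m) _ _ (ι_mem_homog i) (pow_mem_homog i m),
            ih, hrθ i, if_neg (fun h => hLi h.symm), mul_zero, zero_mul, smul_zero, add_zero]
      have hrji : ∀ m : ℕ, r (θ j * θ i ^ m) = (q ^ ((m:ℤ) * d j i)) • θ i ^ m := by
        intro m
        rw [hrL (Finsupp.single j 1) (Finsupp.single i m) _ _ (ι_mem_homog j) (pow_mem_homog i m),
          hri, mul_zero, zero_add, hrθ j, if_pos hLj.symm, one_mul, pairing_single, hLj]
      have hterm : ∀ s ∈ Finset.range (n+1),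
          (((-1 : RatFunc ℚ)) ^ s * qbinomAt t n s) • r (θ i ^ s * (θ j * θ i ^ (n - s)))
            = ((((-1 : RatFunc ℚ)) ^ s * qbinomAt t n s) * q ^ ((((n-s) : ℕ):ℤ) * d j i)) • θ i ^ n := by
        intro s hs
        rw [Finset.mem_range] at hs
        rw [hrL (Finsupp.single i s) _ _ _ (pow_mem_homog i s) (cons_pow_mem_homog j i (n-s)),
          hri, zero_mul, smul_zero, add_zero, hrji, mul_smul_comm, ← pow_add,
          show s + (n - s) = n from by omega, smul_smul]
      rw [Finset.sum_congr rfl hterm, ← Finset.sum_smul]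
      have hscal : ∑ s ∈ Finset.range (n+1),
          (((-1 : RatFunc ℚ)) ^ s * qbinomAt t n s) * q ^ ((((n-s) : ℕ):ℤ) * d j i) = 0 := by
        have hKz : ∀ s ∈ Finset.range (n+1),
            (((-1 : RatFunc ℚ)) ^ s * qbinomAt t n s) * q ^ ((((n-s) : ℕ):ℤ) * d j i)
              = q ^ (-((e*n*(n-1) : ℕ) : ℤ)) *
                ((-1 : RatFunc ℚ)^s * t^(s*(n-1)) * qbinomAt t n s) := by
          intro s hs
          rw [Finset.mem_range] at hs
          have hdLi : d j i = (1 - (n:ℤ)) * e := by rw [← hsymm i j]; exact hdij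
          have hz : (((n-s) : ℕ):ℤ) * d j i
              = -((e*n*(n-1) : ℕ) : ℤ) + ((e*(s*(n-1)) : ℕ) : ℤ) := by
            rw [hdLi]
            push_cast [Nat.cast_sub (by omega : s ≤ n), Nat.cast_sub (by omega : 1 ≤ n)]
            ring
          rw [hz, zpow_add₀ hX0, zpow_neg, zpow_natCast, zpow_natCast, htdef, ← pow_mul]
          ring
        rw [Finset.sum_congr rfl hKz, ← Finset.mul_sum, qbinom_alt t ht0 ht1 n hn1, mul_zero]
      rw [hscal, zero_smul]
    · -- case ℓ ∉ {i, j}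
      have hri : ∀ m, r (θ i ^ m) = 0 := by
        intro m
        induction m with
        | zero => simpa using hr1
        | succ m ih =>
          rw [pow_succ',
            hrL (Finsupp.single i 1) (Finsupp.single i m) _ _ (ι_mem_homog i) (pow_mem_homog i m),
            ih, hrθ i, if_neg (fun h => hLi h.symm), mul_zero, zero_mul, smul_zero, add_zero]
      have hrji : ∀ m, r (θ j * θ i ^ m) = 0 := by
        intro m
        rw [hrL (Finsupp.single j 1) (Finsupp.single i m) _ _ (ι_mem_homog j) (pow_mem_homog i m),
          hri, hrθ j, if_neg (fun h => hLj h.symm), mul_zero, zero_mul, smul_zero, add_zero]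
      apply Finset.sum_eq_zero
      intro s hs
      rw [hrL (Finsupp.single i s) _ _ _ (pow_mem_homog i s) (cons_pow_mem_homog j i (n-s)),
        hrji, hri, mul_zero, zero_mul, smul_zero, add_zero, smul_zero]
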